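/- (Lemma 6.9, bounded density and Stieltjes transform) Let μ be a probability measure on ℝ and let M > 0. The following are equivalent: (i) μ is absolutely continuous with respect to Lebesgue measure with a density ρ satisfying ρ(x) ≤ M for almost every x; (ii) Im m_μ(z) ≤ πM for all z ∈ ℂ⁺. -/

import Mathlib

open MeasureTheory

noncomputable section

/-- The Stieltjes transform `m_μ(z) = ∫ (t − z)⁻¹ dμ(t)` of a measure on `ℝ`. -/
def stP (μ : Measure ℝ) (z : ℂ) : ℂ := ∫ t, ((t : ℂ) - z)⁻¹ ∂μ

/-- The Stieltjes transform of a finite signed measure on `ℝ`. -/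
def stS (ν : SignedMeasure ℝ) (z : ℂ) : ℂ :=
  stP ν.toJordanDecomposition.posPart z - stP ν.toJordanDecomposition.negPart z

/-- The symmetrization `μ^s(X) = (μ(X) + μ(−X))/2` of a measure on `ℝ`. -/
def symmM (μ : Measure ℝ) : Measure ℝ :=
  (2 : ENNReal)⁻¹ • (μ + Measure.map (fun x : ℝ => -x) μ)

/-- A measure on `ℝ` is compactly supported. -/
def HasCompactSupportM (μ : Measure ℝ) : Prop := ∃ R : ℝ, μ {x : ℝ | R < |x|} = 0

/-- `(m, Sμ, Sν)` is the subordination triple for the pair `(μ, ν)` of compactly supported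
probability measures on `ℝ`: the three functions are analytic on `ℂ⁺`, satisfy the
subordination system, the prescribed asymptotics as `|z| → ∞`, and `Sμ, Sν` take values
in the closed upper half-plane.  Such a triple exists and is unique, and `m` is the
Stieltjes transform of the free convolution `μ ⊞ ν`. -/
structure IsSubTriple (μ ν : Measure ℝ) (m Sμ Sν : ℂ → ℂ) : Prop where
  diff_m : DifferentiableOn ℂ m {z : ℂ | 0 < z.im}
  diff_Sμ : DifferentiableOn ℂ Sμ {z : ℂ | 0 < z.im}
  diff_Sν : DifferentiableOn ℂ Sν {z : ℂ | 0 < z.im}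
  eq1 : ∀ z : ℂ, 0 < z.im → m z = stP μ (z + Sν z)
  eq2 : ∀ z : ℂ, 0 < z.im → m z = stP ν (z + Sμ z)
  eq3 : ∀ z : ℂ, 0 < z.im → -(z + (m z)⁻¹) = Sμ z + Sν z
  asympt_m : ∃ C R : ℝ, ∀ z : ℂ, 0 < z.im → R ≤ ‖z‖ →
      ‖m z + z⁻¹‖ ≤ C / ‖z‖ ^ 2
  asympt_S : ∃ C R : ℝ, ∀ z : ℂ, 0 < z.im → R ≤ ‖z‖ →
      ‖Sμ z‖ + ‖Sν z‖ ≤ C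
  im_Sμ : ∀ z : ℂ, 0 < z.im → 0 ≤ (Sμ z).im
  im_Sν : ∀ z : ℂ, 0 < z.im → 0 ≤ (Sν z).im

/-- `κ_{μ,ν}(z)`, defined from the subordination functions `Sμ, Sν`. -/
def kappaF (μ ν : Measure ℝ) (Sμ Sν : ℂ → ℂ) (z : ℂ) : ℂ :=
  (deriv (stP μ) (z + Sν z) + deriv (stP ν) (z + Sμ z)) * ((z + Sμ z + Sν z) ^ 2)⁻¹
    - deriv (stP μ) (z + Sν z) * deriv (stP ν) (z + Sμ z)

/-- `α_{μ,ν}(z)`. -/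
def alphaF (μ ν : Measure ℝ) (Sμ Sν : ℂ → ℂ) (z : ℂ) : ℝ :=
  ((‖z + Sμ z + Sν z‖ ^ 2)⁻¹ + ‖deriv (stP μ) (z + Sν z)‖
      + ‖deriv (stP ν) (z + Sμ z)‖) / ‖kappaF μ ν Sμ Sν z‖

/-- `β_{μ,ν}(z)`. -/
def betaF (μ ν : Measure ℝ) (Sμ Sν : ℂ → ℂ) (z : ℂ) : ℝ :=
  (‖z + Sμ z + Sν z‖ ^ 3)⁻¹
    + ‖deriv (deriv (stP μ)) (z + Sν z)‖
    + ‖deriv (deriv (stP ν)) (z + Sμ z)‖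

/-- The singular values of an `N × N` complex matrix: the square roots of the eigenvalues
of the Hermitian matrix `Mᴴ M`. -/
def singVal {N : ℕ} (M : Matrix (Fin N) (Fin N) ℂ) (i : Fin N) : ℝ :=
  Real.sqrt ((Matrix.isHermitian_conjTranspose_mul_self M).eigenvalues i)

/-- The empirical singular value distribution `ν_M = N⁻¹ ∑ δ_{s_i}`. -/
def empSV {N : ℕ} (M : Matrix (Fin N) (Fin N) ℂ) : Measure ℝ :=
  ((N : ENNReal))⁻¹ • ∑ i : Fin N, Measure.dirac (singVal M i)

section BDHelpers
open Real

/-- Poisson kernel. -/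
def pk (η x t : ℝ) : ℝ := η / ((t - x) ^ 2 + η ^ 2)

lemma pk_nonneg {η : ℝ} (hη : 0 < η) (x t : ℝ) : 0 ≤ pk η x t := by
  unfold pk; positivity

lemma pk_le {η : ℝ} (hη : 0 < η) (x t : ℝ) : pk η x t ≤ η⁻¹ := by
  unfold pk
  rw [div_le_iff₀ (by positivity)]
  rw [inv_mul_eq_div, le_div_iff₀ hη]
  nlinarith [sq_nonneg (t - x)]

lemma pk_cont {η : ℝ} (hη : 0 < η) : Continuous fun p : ℝ × ℝ => pk η p.1 p.2 := by
  unfold pk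
  exact continuous_const.div (by fun_prop) fun p => by positivity

lemma im_inv_sub (z : ℂ) (t : ℝ) : (((t:ℂ) - z)⁻¹).im = pk z.im z.re t := by
  rw [Complex.inv_im, Complex.normSq_apply, pk]
  simp only [Complex.sub_im, Complex.sub_re, Complex.ofReal_im, Complex.ofReal_re]
  ring_nf

lemma integrable_inv_sub (μ : Measure ℝ) [IsFiniteMeasure μ] {z : ℂ} (hz : 0 < z.im) :
    Integrable (fun t : ℝ => ((t:ℂ) - z)⁻¹) μ := by
  have hne : ∀ t : ℝ, ((t:ℂ) - z) ≠ 0 := by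
    intro t h0
    have : ((t:ℂ) - z).im = 0 := by rw [h0]; simp
    simp only [Complex.sub_im, Complex.ofReal_im, zero_sub, neg_eq_zero] at this
    exact hz.ne' this
  refine (integrable_const (z.im)⁻¹).mono' ?_ (.of_forall fun t => ?_)
  · exact (((Complex.continuous_ofReal).sub continuous_const).inv₀ hne).aestronglyMeasurable
  · rw [norm_inv]
    refine inv_anti₀ hz ?_
    calc z.im = |((t:ℂ) - z).im| := by simp [abs_of_nonpos, hz.le]
    _ ≤ ‖(t:ℂ) - z‖ := Complex.abs_im_le_norm _

lemma integrable_pk (μ : Measure ℝ) [IsFiniteMeasure μ] {η : ℝ} (hη : 0 < η) (x : ℝ) :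
    Integrable (fun t => pk η x t) μ := by
  refine (integrable_const η⁻¹).mono' ?_ (.of_forall fun t => ?_)
  · exact ((pk_cont hη).comp (Continuous.prodMk_right x)).aestronglyMeasurable
  · rw [Real.norm_eq_abs, abs_of_nonneg (pk_nonneg hη x t)]
    exact pk_le hη x t

lemma im_stP (μ : Measure ℝ) [IsFiniteMeasure μ] {z : ℂ} (hz : 0 < z.im) :
    (stP μ z).im = ∫ t, pk z.im z.re t ∂μ := by
  rw [stP, ← RCLike.im_eq_complex_im, ← integral_im (integrable_inv_sub μ hz)]
  refine integral_congr_ae (.of_forall fun t => ?_)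
  simp only [RCLike.im_eq_complex_im]
  exact im_inv_sub z t

lemma pk_lint (μ : Measure ℝ) [IsFiniteMeasure μ] {z : ℂ} (hz : 0 < z.im) :
    ∫⁻ t, ENNReal.ofReal (pk z.im z.re t) ∂μ = ENNReal.ofReal ((stP μ z).im) := by
  rw [im_stP μ hz,
    ofReal_integral_eq_lintegral_ofReal (integrable_pk μ hz z.re)
      (.of_forall fun t => pk_nonneg hz z.re t)]

lemma pk_eq {η : ℝ} (hη : 0 < η) (x t : ℝ) :
    pk η x t = η⁻¹ * (1 + ((t - x) / η) ^ 2)⁻¹ := by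
  rw [pk]
  field_simp
  ring

lemma integrable_pk_volume {η : ℝ} (hη : 0 < η) (x : ℝ) :
    Integrable (fun t => pk η x t) (volume : Measure ℝ) := by
  have h1 : Integrable (fun s : ℝ => (1 + (s / η) ^ 2)⁻¹) volume :=
    integrable_inv_one_add_sq.comp_div hη.ne'
  have h2 : Integrable (fun t : ℝ => (1 + ((t - x) / η) ^ 2)⁻¹) volume :=
    h1.comp_sub_right x
  have := h2.const_mul η⁻¹
  refine this.congr (.of_forall fun t => ?_)
  exact (pk_eq hη x t).symm

lemma integral_pk_volume {η : ℝ} (hη : 0 < η) (x : ℝ) :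
    ∫ t, pk η x t ∂(volume : Measure ℝ) = π := by
  have : ∀ t : ℝ, pk η x t = η⁻¹ * (1 + ((t - x) / η) ^ 2)⁻¹ := pk_eq hη x
  rw [integral_congr_ae (.of_forall this), MeasureTheory.integral_const_mul]
  rw [show (fun t : ℝ => (1 + ((t - x) / η) ^ 2)⁻¹)
      = fun t : ℝ => (fun s : ℝ => (1 + (s / η) ^ 2)⁻¹) (t - x) from rfl]
  rw [integral_sub_right_eq_self (fun s : ℝ => (1 + (s / η) ^ 2)⁻¹) x]
  rw [MeasureTheory.Measure.integral_comp_div (fun u : ℝ => (1 + u ^ 2)⁻¹) η]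
  rw [integral_univ_inv_one_add_sq, abs_of_pos hη, smul_eq_mul]
  field_simp

lemma lintegral_pk_volume {η : ℝ} (hη : 0 < η) (x : ℝ) :
    ∫⁻ t, ENNReal.ofReal (pk η x t) ∂(volume : Measure ℝ) = ENNReal.ofReal π := by
  rw [← ofReal_integral_eq_lintegral_ofReal (integrable_pk_volume hη x)
      (.of_forall fun t => pk_nonneg hη x t), integral_pk_volume hη x]

lemma forward_dir (μ : Measure ℝ) [IsFiniteMeasure μ] {M : ℝ} (hM : 0 < M)
    (hac : μ ≪ (volume : Measure ℝ))
    (hbd : ∀ᵐ x ∂(volume : Measure ℝ), μ.rnDeriv volume x ≤ ENNReal.ofReal M)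
    {z : ℂ} (hz : 0 < z.im) : (stP μ z).im ≤ π * M := by
  have hmeas : Measurable fun t => ENNReal.ofReal (pk z.im z.re t) :=
    (ENNReal.measurable_ofReal).comp
      ((pk_cont hz).comp (Continuous.prodMk_right z.re)).measurable
  have hμeq : volume.withDensity (μ.rnDeriv volume) = μ :=
    Measure.withDensity_rnDeriv_eq μ volume hac
  have key : ENNReal.ofReal ((stP μ z).im) ≤ ENNReal.ofReal (π * M) := by
    calc ENNReal.ofReal ((stP μ z).im)
        = ∫⁻ t, ENNReal.ofReal (pk z.im z.re t) ∂μ := (pk_lint μ hz).symm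
      _ = ∫⁻ t, μ.rnDeriv volume t * ENNReal.ofReal (pk z.im z.re t) ∂volume := by
          set ρ := μ.rnDeriv volume with hρ
          rw [← hμeq,
            lintegral_withDensity_eq_lintegral_mul _ (Measure.measurable_rnDeriv _ _) hmeas]
          rfl
      _ ≤ ∫⁻ t, ENNReal.ofReal M * ENNReal.ofReal (pk z.im z.re t) ∂volume :=
          lintegral_mono_ae (hbd.mono fun t ht => mul_le_mul_left ht _)
      _ = ENNReal.ofReal M * ENNReal.ofReal π := by
          rw [lintegral_const_mul _ hmeas, lintegral_pk_volume hz z.re]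
      _ = ENNReal.ofReal (π * M) := by
          rw [← ENNReal.ofReal_mul hM.le, mul_comm]
  exact (ENNReal.ofReal_le_ofReal_iff (by positivity)).mp key

lemma intervalIntegral_pk {η : ℝ} (hη : 0 < η) (t a b : ℝ) :
    ∫ x in a..b, pk η x t = arctan ((b - t) / η) - arctan ((a - t) / η) := by
  have hpt : ∀ x, pk η x t = η⁻¹ * ((fun s : ℝ => (1 + (s / η) ^ 2)⁻¹) (x - t)) := by
    intro x
    simp only [pk]
    field_simp
    ring
  rw [intervalIntegral.integral_congr (g := fun x =>
      η⁻¹ * ((fun s : ℝ => (1 + (s / η) ^ 2)⁻¹) (x - t))) (fun x _ => hpt x),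
    intervalIntegral.integral_const_mul,
    intervalIntegral.integral_comp_sub_right (fun s : ℝ => (1 + (s / η) ^ 2)⁻¹) t,
    intervalIntegral.integral_comp_div (fun u : ℝ => (1 + u ^ 2)⁻¹) hη.ne',
    integral_inv_one_add_sq, smul_eq_mul]
  field_simp

lemma lint_Ioc {η : ℝ} (hη : 0 < η) (t a b : ℝ) (hab : a ≤ b) :
    ∫⁻ x in Set.Ioc a b, ENNReal.ofReal (pk η x t) ∂(volume : Measure ℝ)
      = ENNReal.ofReal (arctan ((b - t) / η) - arctan ((a - t) / η)) := by
  have hcont : Continuous fun x => pk η x t :=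
    (pk_cont hη).comp (continuous_id.prodMk continuous_const)
  rw [← ofReal_integral_eq_lintegral_ofReal (hcont.integrableOn_Ioc)
      (.of_forall fun x => pk_nonneg hη x t)]
  rw [← intervalIntegral.integral_of_le hab, intervalIntegral_pk hη]

lemma E_bound (μ : Measure ℝ) [IsProbabilityMeasure μ] {M : ℝ}
    (h : ∀ z : ℂ, 0 < z.im → (stP μ z).im ≤ π * M)
    {η : ℝ} (hη : 0 < η) {a b : ℝ} (hab : a ≤ b) :
    ∫⁻ t, ENNReal.ofReal (arctan ((b - t) / η) - arctan ((a - t) / η)) ∂μ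
      ≤ ENNReal.ofReal (π * M) * ENNReal.ofReal (b - a) := by
  have hker : AEMeasurable (Function.uncurry fun (t x : ℝ) => ENNReal.ofReal (pk η x t))
      (μ.prod ((volume : Measure ℝ).restrict (Set.Ioc a b))) := by
    refine (ENNReal.continuous_ofReal.comp ((pk_cont hη).comp continuous_swap)).measurable.aemeasurable
  have hinner : ∀ x : ℝ, ∫⁻ t, ENNReal.ofReal (pk η x t) ∂μ ≤ ENNReal.ofReal (π * M) := by
    intro x
    have hz : (0 : ℝ) < (⟨x, η⟩ : ℂ).im := hη
    have := pk_lint μ hz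
    rw [show (⟨x, η⟩ : ℂ).im = η from rfl, show (⟨x, η⟩ : ℂ).re = x from rfl] at this
    rw [this]
    exact ENNReal.ofReal_le_ofReal (h _ hz)
  calc ∫⁻ t, ENNReal.ofReal (arctan ((b - t) / η) - arctan ((a - t) / η)) ∂μ
      = ∫⁻ t, ∫⁻ x in Set.Ioc a b, ENNReal.ofReal (pk η x t) ∂volume ∂μ :=
        (lintegral_congr fun t => (lint_Ioc hη t a b hab).symm)
    _ = ∫⁻ x in Set.Ioc a b, ∫⁻ t, ENNReal.ofReal (pk η x t) ∂μ ∂volume :=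
        lintegral_lintegral_swap hker
    _ ≤ ∫⁻ _x in Set.Ioc a b, ENNReal.ofReal (π * M) ∂volume :=
        lintegral_mono fun x => hinner x
    _ = ENNReal.ofReal (π * M) * ENNReal.ofReal (b - a) := by
        rw [setLIntegral_const, Real.volume_Ioc]

lemma Ioo_bound (μ : Measure ℝ) [IsProbabilityMeasure μ] {M : ℝ} (hM : 0 < M)
    (h : ∀ z : ℂ, 0 < z.im → (stP μ z).im ≤ π * M)
    {a b : ℝ} (hab : a ≤ b) :
    μ (Set.Ioo a b) ≤ ENNReal.ofReal (M * (b - a)) := by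
  set ηs : ℕ → ℝ := fun n => ((n : ℝ) + 1)⁻¹ with hηs
  have hηpos : ∀ n, 0 < ηs n := fun n => by positivity
  set F : ℕ → ℝ → ENNReal := fun n t =>
    ENNReal.ofReal (arctan ((b - t) / ηs n) - arctan ((a - t) / ηs n)) with hF
  have hFmeas : ∀ n, Measurable (F n) := by
    intro n
    exact ENNReal.measurable_ofReal.comp
      (((Real.continuous_arctan.comp (by fun_prop)).sub
        (Real.continuous_arctan.comp (by fun_prop))).measurable)
  have hFub : ∀ n, ∫⁻ t, F n t ∂μ ≤ ENNReal.ofReal (π * M) * ENNReal.ofReal (b - a) :=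
    fun n => E_bound μ h (hηpos n) hab
  have hlim : ∀ t ∈ Set.Ioo a b, Filter.Tendsto (fun n => F n t) Filter.atTop
      (nhds (ENNReal.ofReal π)) := by
    intro t ht
    have hnat : Filter.Tendsto (fun n : ℕ => (n : ℝ) + 1) Filter.atTop Filter.atTop :=
      Filter.tendsto_atTop_add_const_right _ 1 tendsto_natCast_atTop_atTop
    have h1 : Filter.Tendsto (fun n : ℕ => (b - t) / ηs n) Filter.atTop Filter.atTop := by
      have he : (fun n : ℕ => (b - t) / ηs n) = fun n : ℕ => (b - t) * ((n : ℝ) + 1) := by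
        funext n; simp [hηs, div_eq_mul_inv]
      rw [he]
      exact hnat.const_mul_atTop (by linarith [ht.2])
    have h2 : Filter.Tendsto (fun n : ℕ => (a - t) / ηs n) Filter.atTop Filter.atBot := by
      have he : (fun n : ℕ => (a - t) / ηs n) = fun n : ℕ => -((t - a) * ((n : ℝ) + 1)) := by
        funext n; simp [hηs, div_eq_mul_inv]; ring
      rw [he]
      exact Filter.tendsto_neg_atBot_iff.mpr (hnat.const_mul_atTop (by linarith [ht.1]))
    have harc1 : Filter.Tendsto (fun n : ℕ => arctan ((b - t) / ηs n)) Filter.atTop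
        (nhds (π / 2)) :=
      (Real.tendsto_arctan_atTop.mono_right nhdsWithin_le_nhds).comp h1
    have harc2 : Filter.Tendsto (fun n : ℕ => arctan ((a - t) / ηs n)) Filter.atTop
        (nhds (-(π / 2))) :=
      (Real.tendsto_arctan_atBot.mono_right nhdsWithin_le_nhds).comp h2
    have hsub := harc1.sub harc2
    rw [show π / 2 - -(π / 2) = π by ring] at hsub
    exact (ENNReal.continuous_ofReal.tendsto π).comp hsub
  have hind : ∀ t, (Set.Ioo a b).indicator (fun _ => ENNReal.ofReal π) t
      ≤ Filter.liminf (fun n => F n t) Filter.atTop := by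
    intro t
    by_cases ht : t ∈ Set.Ioo a b
    · rw [Set.indicator_of_mem ht, (hlim t ht).liminf_eq]
    · rw [Set.indicator_of_notMem ht]
      exact zero_le
  have hfatou : ∫⁻ t, Filter.liminf (fun n => F n t) Filter.atTop ∂μ
      ≤ Filter.liminf (fun n => ∫⁻ t, F n t ∂μ) Filter.atTop :=
    lintegral_liminf_le hFmeas
  have hchain : ENNReal.ofReal π * μ (Set.Ioo a b)
      ≤ ENNReal.ofReal (π * M) * ENNReal.ofReal (b - a) := by
    calc ENNReal.ofReal π * μ (Set.Ioo a b)
        = ∫⁻ t, (Set.Ioo a b).indicator (fun _ => ENNReal.ofReal π) t ∂μ := by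
          rw [lintegral_indicator measurableSet_Ioo, setLIntegral_const]
      _ ≤ ∫⁻ t, Filter.liminf (fun n => F n t) Filter.atTop ∂μ := lintegral_mono hind
      _ ≤ Filter.liminf (fun n => ∫⁻ t, F n t ∂μ) Filter.atTop := hfatou
      _ ≤ ENNReal.ofReal (π * M) * ENNReal.ofReal (b - a) :=
          Filter.liminf_le_of_frequently_le (Filter.Frequently.of_forall hFub)
  rw [ENNReal.ofReal_mul Real.pi_pos.le, mul_assoc, ← ENNReal.ofReal_mul hM.le] at hchain
  exact (ENNReal.mul_le_mul_iff_right (by simp [Real.pi_pos, Real.pi_pos.ne']) ENNReal.ofReal_ne_top).mp hchain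

lemma Ioc_bound (μ : Measure ℝ) [IsProbabilityMeasure μ] {M : ℝ} (hM : 0 < M)
    (h : ∀ z : ℂ, 0 < z.im → (stP μ z).im ≤ π * M)
    {a b : ℝ} (hab : a ≤ b) :
    μ (Set.Ioc a b) ≤ ENNReal.ofReal (M * (b - a)) := by
  have hinv : Filter.Tendsto (fun n : ℕ => ((n : ℝ) + 1)⁻¹) Filter.atTop (nhds 0) :=
    tendsto_inv_atTop_zero.comp
      (Filter.tendsto_atTop_add_const_right _ 1 tendsto_natCast_atTop_atTop)
  have htend : Filter.Tendsto (fun n : ℕ => ENNReal.ofReal (M * (b + ((n : ℝ) + 1)⁻¹ - a)))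
      Filter.atTop (nhds (ENNReal.ofReal (M * (b - a)))) := by
    refine (ENNReal.continuous_ofReal.tendsto _).comp ?_
    have : Filter.Tendsto (fun n : ℕ => M * (b + ((n : ℝ) + 1)⁻¹ - a)) Filter.atTop
        (nhds (M * (b + 0 - a))) :=
      (((tendsto_const_nhds.add hinv).sub tendsto_const_nhds).const_mul M)
    simpa using this
  refine ge_of_tendsto' htend fun n => ?_
  have hpos : (0 : ℝ) < ((n : ℝ) + 1)⁻¹ := by positivity
  refine le_trans (measure_mono fun t ht => ?_) (Ioo_bound μ hM h (by linarith))
  exact ⟨ht.1, lt_of_le_of_lt ht.2 (by linarith)⟩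


end BDHelpers

/-- **Lemma 6.9 (bounded density and Stieltjes transform).** For a probability measure `μ`
on `ℝ` and `M > 0`, the following are equivalent: (i) `μ` is absolutely continuous with
respect to Lebesgue measure with density `≤ M` a.e.; (ii) `Im m_μ(z) ≤ πM` on `ℂ⁺`. -/
theorem bounded_density_iff_stieltjes_bound (μ : Measure ℝ) (hμ : IsProbabilityMeasure μ)
    (M : ℝ) (hM : 0 < M) :
    (μ ≪ (volume : Measure ℝ) ∧
        ∀ᵐ x ∂(volume : Measure ℝ), μ.rnDeriv volume x ≤ ENNReal.ofReal M) ↔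
      ∀ z : ℂ, 0 < z.im → (stP μ z).im ≤ Real.pi * M := by
  haveI := hμ
  constructor
  · rintro ⟨hac, hbd⟩ z hz
    exact forward_dir μ hM hac hbd hz
  · intro h
    set F := ProbabilityTheory.cdf μ with hFdef
    have hFμ : F.measure = μ := ProbabilityTheory.measure_cdf μ
    have hμIoc : ∀ a b : ℝ, μ (Set.Ioc a b) = ENNReal.ofReal (F b - F a) := by
      intro a b; rw [← hFμ]; exact F.measure_Ioc a b
    have hkey : ∀ a b : ℝ, a ≤ b → F b - F a ≤ M * (b - a) := by
      intro a b hab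
      have h2 := Ioc_bound μ hM h hab
      rw [hμIoc a b] at h2
      exact (ENNReal.ofReal_le_ofReal_iff
        (mul_nonneg hM.le (by linarith))).mp h2
    set G : StieltjesFunction ℝ :=
      { toFun := fun x => M * x - F x
        mono' := fun x y hxy => by have := hkey x y hxy; simp only; linarith
        right_continuous' := fun x =>
          ((continuous_const.mul continuous_id).continuousWithinAt).sub
            (F.right_continuous x) } with hGdef
    haveI : IsLocallyFiniteMeasure (μ + G.measure) := by
      constructor
      intro x
      rcases (μ.finiteAt_nhds x).exists_mem_basis (nhds_basis_opens x) with ⟨U, ⟨hxU, hU⟩, hμU⟩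
      rcases (G.measure.finiteAt_nhds x).exists_mem_basis (nhds_basis_opens x)
        with ⟨V, ⟨hxV, hV⟩, hGV⟩
      refine ⟨U ∩ V, (hU.inter hV).mem_nhds ⟨hxU, hxV⟩, ?_⟩
      rw [Measure.add_apply]
      exact ENNReal.add_lt_top.mpr ⟨lt_of_le_of_lt (measure_mono Set.inter_subset_left) hμU,
        lt_of_le_of_lt (measure_mono Set.inter_subset_right) hGV⟩
    have hsum : μ + G.measure = (ENNReal.ofReal M) • (volume : Measure ℝ) := by
      refine Measure.ext_of_Ioc _ _ fun a b hab => ?_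
      have hFle : F a ≤ F b := F.mono hab.le
      have hGle : M * a - F a ≤ M * b - F b := G.mono hab.le
      rw [Measure.add_apply, hμIoc a b, G.measure_Ioc]
      show ENNReal.ofReal (F b - F a) + ENNReal.ofReal ((M * b - F b) - (M * a - F a))
        = ((ENNReal.ofReal M) • (volume : Measure ℝ)) (Set.Ioc a b)
      rw [Measure.smul_apply, Real.volume_Ioc, smul_eq_mul,
        ← ENNReal.ofReal_mul hM.le,
        ← ENNReal.ofReal_add (by linarith) (by linarith)]
      congr 1
      ring
    have hle : μ ≤ ENNReal.ofReal M • (volume : Measure ℝ) := by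
      rw [← hsum]
      exact Measure.le_add_right le_rfl
    have hac : μ ≪ (volume : Measure ℝ) :=
      Measure.absolutelyContinuous_of_le_smul hle
    refine ⟨hac, ?_⟩
    refine ae_le_of_forall_setLIntegral_le_of_sigmaFinite
      (Measure.measurable_rnDeriv μ volume) fun s hs hfin => ?_
    rw [Measure.setLIntegral_rnDeriv hac]
    calc μ s ≤ (ENNReal.ofReal M • (volume : Measure ℝ)) s := hle s
      _ = ∫⁻ _x in s, ENNReal.ofReal M ∂volume := by
          rw [setLIntegral_const, Measure.smul_apply, smul_eq_mul]
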